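/- arXiv:2010.00785 — 4 statements merged into one kernel-verified Lean document; each statement's English description precedes it below -/
import Mathlib

section
/- Let Ω ⊆ ℂ be a domain, ζ₀ ∈ Ω, and let U be a real-valued harmonic function on Ω such that |U|^2 admits a harmonic majorant on Ω. Suppose V is a real-valued harmonic function on Ω with V(ζ₀) = 0 such that F = U + iV is analytic on Ω. Then |F|^2 admits a harmonic majorant on Ω, and if H_U and H_F denote the least harmonic majorants of |U|^2 and |F|^2 respectively, then H_F(ζ₀) ≤ 2 H_U(ζ₀); equivalently, ‖F‖_{2,ζ₀} ≤ √2 · ‖U‖_{2,ζ₀}. -/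
open Complex Metric Set Filter

/-- A real-valued function is harmonic on an open set `s ⊆ ℂ` if it is locally
the real part of a holomorphic function. -/
def HarmonicOn (u : ℂ → ℝ) (s : Set ℂ) : Prop :=
  ∀ z ∈ s, ∃ ε > 0, ball z ε ⊆ s ∧ ∃ F : ℂ → ℂ,
    DifferentiableOn ℂ F (ball z ε) ∧ ∀ w ∈ ball z ε, (F w).re = u w

/-- A complex-valued function is harmonic if its real and imaginary parts are. -/
def HarmonicOnC (u : ℂ → ℂ) (s : Set ℂ) : Prop :=
  HarmonicOn (fun z => (u z).re) s ∧ HarmonicOn (fun z => (u z).im) s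

/-- `H` is a harmonic majorant of `g` on `s`. -/
def HarmonicMajorantOn (g H : ℂ → ℝ) (s : Set ℂ) : Prop :=
  HarmonicOn H s ∧ ∀ z ∈ s, g z ≤ H z

/-- `H` is the least harmonic majorant of `g` on `s`. -/
def IsLeastHarmonicMajorantOn (g H : ℂ → ℝ) (s : Set ℂ) : Prop :=
  HarmonicMajorantOn g H s ∧ ∀ H', HarmonicMajorantOn g H' s → ∀ z ∈ s, H z ≤ H' z

/-- Riesz's theorem for the Lumer Hardy space `(Lh)²(Ω)`. -/
theorem riesz_lumer (Ω : Set ℂ) (hΩo : IsOpen Ω) (hΩc : IsConnected Ω)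
    (ζ₀ : ℂ) (hζ₀ : ζ₀ ∈ Ω)
    (U V : ℂ → ℝ) (hU : HarmonicOn U Ω) (hV : HarmonicOn V Ω) (hV0 : V ζ₀ = 0)
    (HU : ℂ → ℝ) (hHU : IsLeastHarmonicMajorantOn (fun ζ => ‖(U ζ : ℂ)‖ ^ 2) HU Ω)
    (F : ℂ → ℂ) (hFdef : ∀ ζ ∈ Ω, F ζ = (U ζ : ℂ) + (V ζ : ℂ) * Complex.I)
    (hF : DifferentiableOn ℂ F Ω) :
    (∃ H, HarmonicMajorantOn (fun ζ => ‖F ζ‖ ^ 2) H Ω) ∧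
    ∀ HF, IsLeastHarmonicMajorantOn (fun ζ => ‖F ζ‖ ^ 2) HF Ω →
      HF ζ₀ ≤ 2 * HU ζ₀ ∧
      Real.sqrt (HF ζ₀) ≤ Real.sqrt 2 * Real.sqrt (HU ζ₀) := by

  set H : ℂ → ℝ := fun z => 2 * HU z - (F z ^ 2).re with hHdef
  have hmaj : HarmonicMajorantOn (fun ζ => ‖F ζ‖ ^ 2) H Ω := by
    constructor
    · intro z hz
      obtain ⟨ε, hε, hball, G, hG, hGre⟩ := hHU.1.1 z hz
      refine ⟨ε, hε, hball, fun w => 2 * G w - F w ^ 2, ?_, ?_⟩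
      · exact (hG.const_mul 2).sub ((hF.mono hball).pow 2)
      · intro w hw
        simp [Complex.sub_re, Complex.mul_re, hGre w hw, hHdef]
    · intro ζ hζ
      have h1 := hHU.1.2 ζ hζ
      have key : (U ζ) ^ 2 ≤ HU ζ := by
        simpa [Complex.norm_real, Real.norm_eq_abs, sq_abs] using h1
      have hFζ := hFdef ζ hζ
      have hre : (F ζ).re = U ζ := by simp [hFζ]
      have him : (F ζ).im = V ζ := by simp [hFζ]
      have habs : ‖F ζ‖ ^ 2 = (U ζ) ^ 2 + (V ζ) ^ 2 := by
        rw [Complex.sq_norm, Complex.normSq_apply, hre, him]; ring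
      have hsq : (F ζ ^ 2).re = (U ζ) ^ 2 - (V ζ) ^ 2 := by
        rw [sq, Complex.mul_re, hre, him]; ring
      simp only [hHdef, habs, hsq]
      nlinarith
  refine ⟨⟨H, hmaj⟩, fun HF hHF => ?_⟩
  have hle := hHF.2 H hmaj ζ₀ hζ₀
  have hF0 : F ζ₀ = (U ζ₀ : ℂ) := by rw [hFdef ζ₀ hζ₀, hV0]; simp
  have hHζ : H ζ₀ = 2 * HU ζ₀ - (U ζ₀) ^ 2 := by
    simp [hHdef, hF0, ← Complex.ofReal_pow]
  have h2 : HF ζ₀ ≤ 2 * HU ζ₀ := by nlinarith [sq_nonneg (U ζ₀)]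
  refine ⟨h2, ?_⟩
  calc Real.sqrt (HF ζ₀) ≤ Real.sqrt (2 * HU ζ₀) := Real.sqrt_le_sqrt h2
    _ = Real.sqrt 2 * Real.sqrt (HU ζ₀) := Real.sqrt_mul (by norm_num) _
end

section
/- Let F = U + iV be analytic on a domain Ω ⊆ ℂ with U real-valued, and let H_F be the least harmonic majorant of |F|^2 on Ω. If H_U is the least harmonic majorant of |U|^2, then for every ζ ∈ Ω, H_F(ζ) ≤ 2 H_U(ζ) - Re(F(ζ)^2). -/
open Complex Metric Set Filter

/-- Pointwise bound for the least harmonic majorant of `|F|²` in terms of that of `|Re F|²`. -/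
theorem least_majorant_bound (Ω : Set ℂ) (hΩo : IsOpen Ω) (hΩc : IsConnected Ω)
    (F : ℂ → ℂ) (hF : DifferentiableOn ℂ F Ω)
    (HU : ℂ → ℝ) (hHU : IsLeastHarmonicMajorantOn (fun ζ => ‖((F ζ).re : ℂ)‖ ^ 2) HU Ω)
    (HF : ℂ → ℝ) (hHF : IsLeastHarmonicMajorantOn (fun ζ => ‖F ζ‖ ^ 2) HF Ω) :
    ∀ ζ ∈ Ω, HF ζ ≤ 2 * HU ζ - ((F ζ) ^ 2).re := by
  have hmaj : HarmonicMajorantOn (fun ζ => ‖F ζ‖ ^ 2)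
      (fun ζ => 2 * HU ζ - ((F ζ) ^ 2).re) Ω := by
    constructor
    · intro z hz
      obtain ⟨ε, hε, hball, G, hG, hGre⟩ := hHU.1.1 z hz
      refine ⟨ε, hε, hball, fun w => 2 * G w - (F w) ^ 2, ?_, ?_⟩
      · exact ((hG.const_smul (2:ℂ)).sub (((hF.mono hball).pow 2)))
      · intro w hw
        simp [Complex.sub_re, Complex.mul_re, hGre w hw]
    · intro z hz
      have h1 : ‖((F z).re : ℂ)‖ ^ 2 ≤ HU z := hHU.1.2 z hz
      have h1' : (F z).re ^ 2 ≤ HU z := by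
        rw [Complex.norm_real, Real.norm_eq_abs] at h1; rwa [_root_.sq_abs] at h1
      have h2 : ‖F z‖ ^ 2 = (F z).re ^ 2 + (F z).im ^ 2 := by
        rw [Complex.sq_norm, Complex.normSq_apply]; ring
      have h3 : ((F z) ^ 2).re = (F z).re ^ 2 - (F z).im ^ 2 := by
        rw [sq, Complex.mul_re]; ring
      simp only [h2, h3]
      nlinarith
  exact hHF.2 _ hmaj
end

section
/- Let Ω ⊆ ℂⁿ be a domain and ζ₀ ∈ Ω. Suppose U is a real-valued pluriharmonic function on Ω such that |U|² admits a pluriharmonic majorant on Ω, and suppose F is analytic on Ω with Re F = U and Im F(ζ₀) = 0. Then |F|² admits a pluriharmonic majorant on Ω, and the least pluriharmonic majorants satisfy H_F(ζ₀) ≤ 2 H_U(ζ₀), i.e., ‖F‖_{2,ζ₀} ≤ √2 ‖U‖_{2,ζ₀}. -/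
open Complex Metric Set

/-- A real-valued function on an open set of `ℂⁿ` is pluriharmonic if it is locally
the real part of an analytic function. -/
def PluriharmonicOn {n : ℕ} (u : (Fin n → ℂ) → ℝ) (s : Set (Fin n → ℂ)) : Prop :=
  ∀ z ∈ s, ∃ ε > 0, ball z ε ⊆ s ∧ ∃ F : (Fin n → ℂ) → ℂ,
    DifferentiableOn ℂ F (ball z ε) ∧ ∀ w ∈ ball z ε, (F w).re = u w

/-- `H` is a pluriharmonic majorant of `g` on `s`. -/
def PluriharmonicMajorantOn {n : ℕ} (g H : (Fin n → ℂ) → ℝ) (s : Set (Fin n → ℂ)) : Prop :=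
  PluriharmonicOn H s ∧ ∀ z ∈ s, g z ≤ H z

/-- `H` is the least pluriharmonic majorant of `g` on `s`. -/
def IsLeastPluriharmonicMajorantOn {n : ℕ} (g H : (Fin n → ℂ) → ℝ)
    (s : Set (Fin n → ℂ)) : Prop :=
  PluriharmonicMajorantOn g H s ∧
    ∀ H', PluriharmonicMajorantOn g H' s → ∀ z ∈ s, H z ≤ H' z

/-- Riesz's theorem for Lumer Hardy spaces on domains in `ℂⁿ`. -/
theorem riesz_lumer_cn {n : ℕ} (Ω : Set (Fin n → ℂ)) (hΩo : IsOpen Ω) (hΩc : IsConnected Ω)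
    (ζ₀ : Fin n → ℂ) (hζ₀ : ζ₀ ∈ Ω)
    (U : (Fin n → ℂ) → ℝ) (hU : PluriharmonicOn U Ω)
    (HU : (Fin n → ℂ) → ℝ)
    (hHU : IsLeastPluriharmonicMajorantOn (fun ζ => ‖((U ζ : ℝ) : ℂ)‖ ^ 2) HU Ω)
    (F : (Fin n → ℂ) → ℂ) (hF : DifferentiableOn ℂ F Ω)
    (hFre : ∀ ζ ∈ Ω, (F ζ).re = U ζ) (hFim : (F ζ₀).im = 0) :
    (∃ H, PluriharmonicMajorantOn (fun ζ => ‖F ζ‖ ^ 2) H Ω) ∧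
    ∀ HF, IsLeastPluriharmonicMajorantOn (fun ζ => ‖F ζ‖ ^ 2) HF Ω →
      HF ζ₀ ≤ 2 * HU ζ₀ ∧
      Real.sqrt (HF ζ₀) ≤ Real.sqrt 2 * Real.sqrt (HU ζ₀) := by
  -- Candidate majorant: H = 2 HU - Re (F²)
  set H : (Fin n → ℂ) → ℝ := fun z => 2 * HU z - (F z ^ 2).re with hHdef
  have hUsq : ∀ ζ ∈ Ω, ‖((U ζ : ℝ) : ℂ)‖ ^ 2 ≤ HU ζ := hHU.1.2
  have hmaj : PluriharmonicMajorantOn (fun ζ => ‖F ζ‖ ^ 2) H Ω := by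
    constructor
    · intro z hz
      obtain ⟨ε, hε, hball, G, hG, hGre⟩ := hHU.1.1 z hz
      refine ⟨ε, hε, hball, fun w => 2 * G w - F w ^ 2, ?_, ?_⟩
      · exact ((hG.const_mul 2).sub ((hF.mono hball).pow 2))
      · intro w hw
        simp [hHdef, hGre w hw]
    · intro z hz
      have h1 : ‖((U z : ℝ) : ℂ)‖ ^ 2 ≤ HU z := hUsq z hz
      have habs : ‖((U z : ℝ) : ℂ)‖ ^ 2 = (U z) ^ 2 := by
        rw [Complex.norm_real, Real.norm_eq_abs]; exact sq_abs _
      have hre : (F z).re = U z := hFre z hz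
      have h2 : ‖F z‖ ^ 2 = (F z).re ^ 2 + (F z).im ^ 2 := by
        rw [Complex.sq_norm, Complex.normSq_apply]; ring
      have h3 : (F z ^ 2).re = (F z).re ^ 2 - (F z).im ^ 2 := by
        rw [sq, Complex.mul_re]; ring
      have h4 : (U z) ^ 2 ≤ HU z := habs ▸ h1
      have h5 : (F z).re ^ 2 ≤ HU z := by rw [hre]; exact h4
      simp only [hHdef, h2, h3]
      linarith
  refine ⟨⟨H, hmaj⟩, fun HF hHF => ?_⟩
  have hle : HF ζ₀ ≤ H ζ₀ := hHF.2 H hmaj ζ₀ hζ₀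
  have hre0 : (F ζ₀).re = U ζ₀ := hFre ζ₀ hζ₀
  have h3 : (F ζ₀ ^ 2).re = (U ζ₀) ^ 2 := by
    rw [sq, Complex.mul_re, hre0, hFim]; ring
  have hmain : HF ζ₀ ≤ 2 * HU ζ₀ := by
    have : H ζ₀ = 2 * HU ζ₀ - (U ζ₀) ^ 2 := by simp [hHdef, h3]
    nlinarith [sq_nonneg (U ζ₀)]
  refine ⟨hmain, ?_⟩
  calc Real.sqrt (HF ζ₀) ≤ Real.sqrt (2 * HU ζ₀) := Real.sqrt_le_sqrt hmain
    _ = Real.sqrt 2 * Real.sqrt (HU ζ₀) := Real.sqrt_mul (by norm_num) _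
end

section
/- If F is analytic on the open unit disk and U = Re F with sup_{0<r<1} M₂(U, r) < ∞, then sup_{0<r<1} M₂(F, r)² ≤ 2 sup_{0<r<1} M₂(U, r)² + |Re(F(0)²)|, so F belongs to the Hardy space H². -/
open Complex Metric Set Filter

/-- The squared integral mean of order 2 of a complex-valued function on the circle of radius `r`. -/
noncomputable def M2sq (g : ℂ → ℂ) (r : ℝ) : ℝ :=
  (1 / (2 * Real.pi)) * ∫ θ in (0:ℝ)..(2 * Real.pi),
    ‖g ((r : ℂ) * Complex.exp (θ * Complex.I))‖ ^ 2


/-- Mean value property over the circle of radius `r`. -/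
lemma mean_value_circle (f : ℂ → ℂ) (hf : DifferentiableOn ℂ f (ball (0:ℂ) 1))
    {r : ℝ} (hr : r ∈ Ioo (0:ℝ) 1) :
    ∫ θ in (0:ℝ)..(2 * Real.pi), f ((r : ℂ) * Complex.exp (θ * Complex.I))
      = 2 * Real.pi * f 0 := by
  obtain ⟨hr0, hr1⟩ := hr
  have hsub : closedBall (0:ℂ) r ⊆ ball (0:ℂ) 1 := by
    intro z hz
    simp only [mem_closedBall, mem_ball] at *
    linarith
  have hd : DifferentiableOn ℂ f (closedBall (0:ℂ) r) := hf.mono hsub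
  have h0 : (0:ℂ) ∈ ball (0:ℂ) r := by simpa using hr0
  have key := hd.circleIntegral_sub_inv_smul h0
  rw [circleIntegral] at key
  have hne : ∀ θ : ℝ, circleMap 0 r θ ≠ 0 := by
    intro θ h
    have := norm_circleMap_zero r θ
    rw [h] at this
    simp [abs_of_pos hr0] at this
    linarith
  have heq : ∀ θ : ℝ, deriv (circleMap 0 r) θ • ((circleMap 0 r θ - 0)⁻¹ • f (circleMap 0 r θ))
      = Complex.I * f (circleMap 0 r θ) := by
    intro θ
    rw [deriv_circleMap]
    simp only [smul_eq_mul, sub_zero]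
    field_simp [hne θ]
  simp only [heq] at key
  rw [intervalIntegral.integral_const_mul] at key
  have := mul_left_cancel₀ Complex.I_ne_zero (by rw [key, smul_eq_mul]; ring :
    Complex.I * ∫ θ in (0:ℝ)..(2*Real.pi), f (circleMap 0 r θ)
      = Complex.I * (2 * Real.pi * f 0))
  simpa only [circleMap_zero] using this

lemma cont_comp (F : ℂ → ℂ) (hF : DifferentiableOn ℂ F (ball (0:ℂ) 1))
    {r : ℝ} (hr : r ∈ Ioo (0:ℝ) 1) :
    Continuous (fun θ : ℝ => F ((r : ℂ) * Complex.exp (θ * Complex.I))) := by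
  obtain ⟨hr0, hr1⟩ := hr
  have hmap : ∀ θ : ℝ, ((r : ℂ) * Complex.exp (θ * Complex.I)) ∈ ball (0:ℂ) 1 := by
    intro θ
    simp only [mem_ball, dist_zero_right, norm_mul,
      Complex.norm_exp_ofReal_mul_I, Complex.norm_real, Real.norm_eq_abs, mul_one, abs_of_pos hr0]
    exact hr1
  exact hF.continuousOn.comp_continuous (by continuity) hmap

lemma M2sq_key (F : ℂ → ℂ) (hF : DifferentiableOn ℂ F (ball (0:ℂ) 1))
    {r : ℝ} (hr : r ∈ Ioo (0:ℝ) 1) :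
    M2sq F r = 2 * M2sq (fun z => ((F z).re : ℂ)) r - ((F 0) ^ 2).re := by
  set c : ℝ → ℂ := fun θ => (r : ℂ) * Complex.exp (θ * Complex.I) with hc
  have hFc : Continuous fun θ => F (c θ) := cont_comp F hF hr
  have hG : DifferentiableOn ℂ (fun z => (F z) ^ 2) (ball (0:ℂ) 1) := hF.pow 2
  have hmv : ∫ θ in (0:ℝ)..(2 * Real.pi), (F (c θ)) ^ 2 = 2 * Real.pi * (F 0) ^ 2 :=
    mean_value_circle _ hG hr
  have i2 : IntervalIntegrable (fun θ => F (c θ) ^ 2) MeasureTheory.volume 0 (2 * Real.pi) :=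
    (hFc.pow 2).intervalIntegrable _ _
  have hre : ∫ θ in (0:ℝ)..(2 * Real.pi), ((F (c θ)) ^ 2).re = 2 * Real.pi * ((F 0) ^ 2).re := by
    have := Complex.reCLM.intervalIntegral_comp_comm i2
    simp only [Complex.reCLM_apply] at this
    rw [this, hmv]
    simp
  have i3 : IntervalIntegrable (fun θ => ((F (c θ)).re) ^ 2) MeasureTheory.volume 0 (2 * Real.pi) :=
    ((Complex.continuous_re.comp hFc).pow 2).intervalIntegrable _ _
  have i4 : IntervalIntegrable (fun θ => ((F (c θ)) ^ 2).re) MeasureTheory.volume 0 (2 * Real.pi) :=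
    (Complex.continuous_re.comp (hFc.pow 2)).intervalIntegrable _ _
  have hpt : ∀ z : ℂ, ‖z‖ ^ 2 = 2 * (z.re) ^ 2 - (z ^ 2).re := by
    intro z
    rw [Complex.sq_norm, Complex.normSq_apply]
    simp only [pow_two, Complex.mul_re]
    ring
  have hpi : Real.pi ≠ 0 := Real.pi_ne_zero
  have hint : ∫ θ in (0:ℝ)..(2 * Real.pi), ‖F (c θ)‖ ^ 2
      = 2 * (∫ θ in (0:ℝ)..(2 * Real.pi), ((F (c θ)).re) ^ 2) - 2 * Real.pi * ((F 0) ^ 2).re := by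
    have : (fun θ => ‖F (c θ)‖ ^ 2)
        = fun θ => 2 * ((F (c θ)).re) ^ 2 - ((F (c θ)) ^ 2).re := by
      funext θ; exact hpt _
    rw [this, intervalIntegral.integral_sub ((i3.const_mul 2)) i4,
      intervalIntegral.integral_const_mul, hre]
  have hM2U : M2sq (fun z => ((F z).re : ℂ)) r
      = (1 / (2 * Real.pi)) * ∫ θ in (0:ℝ)..(2 * Real.pi), ((F (c θ)).re) ^ 2 := by
    simp only [M2sq, Complex.norm_real, Real.norm_eq_abs, _root_.sq_abs]
    rfl
  rw [M2sq, hM2U]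
  rw [hint]
  field_simp

/-- If `F` is analytic on the unit disk and `Re F` has bounded means, then `F ∈ H²`, with
`sup M₂(F,r)² ≤ 2 sup M₂(Re F, r)² + |Re (F 0 ^ 2)|`. -/
theorem analytic_in_H2 (F : ℂ → ℂ) (hF : DifferentiableOn ℂ F (ball (0:ℂ) 1))
    (hUb : ∃ C : ℝ, ∀ r ∈ Ioo (0:ℝ) 1, M2sq (fun z => ((F z).re : ℂ)) r ≤ C) :
    (∃ C : ℝ, ∀ r ∈ Ioo (0:ℝ) 1, M2sq F r ≤ C) ∧
    sSup (M2sq F '' Ioo (0:ℝ) 1) ≤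
      2 * sSup (M2sq (fun z => ((F z).re : ℂ)) '' Ioo (0:ℝ) 1) + |((F 0) ^ 2).re| := by
  obtain ⟨C, hC⟩ := hUb
  set U : ℂ → ℂ := fun z => ((F z).re : ℂ) with hU
  have hbdd : BddAbove (M2sq U '' Ioo (0:ℝ) 1) := by
    refine ⟨C, ?_⟩
    rintro _ ⟨r, hr, rfl⟩
    exact hC r hr
  have hbound : ∀ r ∈ Ioo (0:ℝ) 1,
      M2sq F r ≤ 2 * sSup (M2sq U '' Ioo (0:ℝ) 1) + |((F 0) ^ 2).re| := by
    intro r hr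
    rw [M2sq_key F hF hr]
    have h1 : M2sq U r ≤ sSup (M2sq U '' Ioo (0:ℝ) 1) :=
      le_csSup hbdd (mem_image_of_mem _ hr)
    have h2 : -((F 0) ^ 2).re ≤ |((F 0) ^ 2).re| := neg_le_abs _
    linarith
  refine ⟨⟨_, hbound⟩, ?_⟩
  refine csSup_le ?_ ?_
  · exact (nonempty_Ioo.mpr one_pos).image _
  · rintro _ ⟨r, hr, rfl⟩
    exact hbound r hr
end
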